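/- Let u(t) be a time-differentiable family of periodic grid functions solving the semi-discrete scheme (u_i)'(t) = −(1/3)[u_i(t)(D₀u(t))_i + (D₀(u(t)²))_i] − (D₋D₊²u(t))_i + (D₊³D₋²u(t))_i for all i and all t ∈ [0,T]. Then for every t ∈ [0,T]: ‖u(t)‖_h² + (Δx/2) ∫₀ᵗ (‖D₊D₋u(τ)‖_h² + ‖D₋D₊²u(τ)‖_h²) dτ ≤ ‖u(0)‖_h²; in particular ‖u(t)‖_h ≤ ‖u(0)‖_h for all t. -/

import Mathlib

/-- Forward difference operator `(D₊u)_i = (u_{i+1} − u_i)/h`. -/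
noncomputable def Dp (h : ℝ) (u : ℤ → ℝ) : ℤ → ℝ := fun i => (u (i + 1) - u i) / h

/-- Backward difference operator `(D₋u)_i = (u_i − u_{i−1})/h`. -/
noncomputable def Dm (h : ℝ) (u : ℤ → ℝ) : ℤ → ℝ := fun i => (u i - u (i - 1)) / h

/-- Central difference operator `(D₀u)_i = (u_{i+1} − u_{i−1})/(2h)`. -/
noncomputable def D0 (h : ℝ) (u : ℤ → ℝ) : ℤ → ℝ := fun i => (u (i + 1) - u (i - 1)) / (2 * h)

/-- Discrete inner product `(f,g)_h = h Σ_{i=1}^N f_i g_i`. -/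
noncomputable def iph (N : ℕ) (h : ℝ) (f g : ℤ → ℝ) : ℝ :=
  h * ∑ i ∈ Finset.Icc (1 : ℤ) (N : ℤ), f i * g i

/-- Discrete squared norm `‖f‖_h² = h Σ_{i=1}^N f_i²`. -/
noncomputable def nh2 (N : ℕ) (h : ℝ) (f : ℤ → ℝ) : ℝ :=
  h * ∑ i ∈ Finset.Icc (1 : ℤ) (N : ℤ), (f i) ^ 2

/-- Discrete norm `‖f‖_h`. -/
noncomputable def normh (N : ℕ) (h : ℝ) (f : ℤ → ℝ) : ℝ := Real.sqrt (nh2 N h f)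

/-- A periodic grid function with period `N`: `u_{i+N} = u_i` for all `i`. -/
def PeriodicGrid (N : ℕ) (u : ℤ → ℝ) : Prop := ∀ i : ℤ, u (i + N) = u i

section Aux
variable {N : ℕ} {h : ℝ} {f g v : ℤ → ℝ}

lemma per_Dp (hf : PeriodicGrid N f) : PeriodicGrid N (Dp h f) := by
  intro i; simp only [Dp]
  rw [hf i, show i + (N:ℤ) + 1 = (i + 1) + (N:ℤ) by ring, hf]

lemma per_Dm (hf : PeriodicGrid N f) : PeriodicGrid N (Dm h f) := by
  intro i; simp only [Dm]
  rw [hf i, show i + (N:ℤ) - 1 = (i - 1) + (N:ℤ) by ring, hf]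

lemma per_sq (hf : PeriodicGrid N f) : PeriodicGrid N (fun i => f i ^ 2) := by
  intro i; simp only; rw [hf]

lemma sum_shift (hN : 1 ≤ N) (hf : PeriodicGrid N f) :
    ∑ i ∈ Finset.Icc (1:ℤ) (N:ℤ), f (i+1) = ∑ i ∈ Finset.Icc (1:ℤ) (N:ℤ), f i := by
  have hN' : (1:ℤ) ≤ (N:ℤ) := by exact_mod_cast hN
  have h1 : ∑ i ∈ Finset.Icc (1:ℤ) (N:ℤ), f (i+1)
      = ∑ i ∈ Finset.Icc ((1:ℤ)+1) ((N:ℤ)+1), f i := by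
    rw [← Finset.map_add_right_Icc (1:ℤ) (N:ℤ) 1, Finset.sum_map]
    simp [addRightEmbedding]
  have h2 : Finset.Icc ((1:ℤ)+1) ((N:ℤ)+1) = insert ((N:ℤ)+1) (Finset.Icc 2 (N:ℤ)) := by
    ext x; simp [Finset.mem_Icc]; omega
  have h3 : Finset.Icc (1:ℤ) (N:ℤ) = insert (1:ℤ) (Finset.Icc 2 (N:ℤ)) := by
    ext x; simp [Finset.mem_Icc]; omega
  rw [h1, h2, h3, Finset.sum_insert (by simp), Finset.sum_insert (by simp [Finset.mem_Icc])]
  rw [show (N:ℤ)+1 = 1 + (N:ℤ) by ring, hf 1]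

lemma sum_shift_neg (hN : 1 ≤ N) (hf : PeriodicGrid N f) :
    ∑ i ∈ Finset.Icc (1:ℤ) (N:ℤ), f (i-1) = ∑ i ∈ Finset.Icc (1:ℤ) (N:ℤ), f i := by
  have hp : PeriodicGrid N (fun i => f (i-1)) := by
    intro i; simp only; rw [show i + (N:ℤ) - 1 = (i-1) + (N:ℤ) by ring, hf]
  have h1 := sum_shift hN hp
  calc ∑ i ∈ Finset.Icc (1:ℤ) (N:ℤ), f (i-1)
      = ∑ i ∈ Finset.Icc (1:ℤ) (N:ℤ), f (i+1-1) := h1.symm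
    _ = ∑ i ∈ Finset.Icc (1:ℤ) (N:ℤ), f i := by
        apply Finset.sum_congr rfl; intro i _; rw [show i + 1 - 1 = i by ring]

/-- Summation by parts: `(D₊f, g) = −(f, D₋g)`. -/
lemma sbp (hN : 1 ≤ N) (hh : h ≠ 0) (hf : PeriodicGrid N f) (hg : PeriodicGrid N g) :
    iph N h (Dp h f) g = - iph N h f (Dm h g) := by
  have hP : PeriodicGrid N (fun i => f (i+1) * g i) := by
    intro i; simp only
    rw [hg i, show i + (N:ℤ) + 1 = (i + 1) + (N:ℤ) by ring, hf]
  have e1 : iph N h (Dp h f) g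
      = (∑ i ∈ Finset.Icc (1:ℤ) (N:ℤ), f (i+1) * g i)
        - ∑ i ∈ Finset.Icc (1:ℤ) (N:ℤ), f i * g i := by
    unfold iph Dp
    rw [Finset.mul_sum, ← Finset.sum_sub_distrib]
    apply Finset.sum_congr rfl; intro i _; field_simp
  have e2 : iph N h f (Dm h g)
      = (∑ i ∈ Finset.Icc (1:ℤ) (N:ℤ), f i * g i)
        - ∑ i ∈ Finset.Icc (1:ℤ) (N:ℤ), f i * g (i-1) := by
    unfold iph Dm
    rw [Finset.mul_sum, ← Finset.sum_sub_distrib]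
    apply Finset.sum_congr rfl; intro i _; field_simp
  have e3 : ∑ i ∈ Finset.Icc (1:ℤ) (N:ℤ), f i * g (i-1)
      = ∑ i ∈ Finset.Icc (1:ℤ) (N:ℤ), f (i+1) * g i := by
    have h4 := sum_shift_neg hN hP
    rw [← h4]
    apply Finset.sum_congr rfl; intro i _; rw [show i - 1 + 1 = i by ring]
  rw [e1, e2, e3]; ring

/-- Symmetric summation by parts: `(f, D₊g) = −(D₋f, g)`. -/
lemma sbp2 (hN : 1 ≤ N) (hh : h ≠ 0) (hf : PeriodicGrid N f) (hg : PeriodicGrid N g) :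
    iph N h f (Dp h g) = - iph N h (Dm h f) g := by
  have c1 : iph N h f (Dp h g) = iph N h (Dp h g) f := by
    unfold iph; congr 1; apply Finset.sum_congr rfl; intro i _; ring
  have c2 : iph N h g (Dm h f) = iph N h (Dm h f) g := by
    unfold iph; congr 1; apply Finset.sum_congr rfl; intro i _; ring
  rw [c1, sbp hN hh hg hf, c2]

/-- `(v, D₊v) = −(h/2)‖D₊v‖²`. -/
lemma iph_self_Dp (hN : 1 ≤ N) (hh : h ≠ 0) (hv : PeriodicGrid N v) :
    iph N h v (Dp h v) = -(h/2) * nh2 N h (Dp h v) := by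
  have e1 : iph N h v (Dp h v)
      = ∑ i ∈ Finset.Icc (1:ℤ) (N:ℤ),
          ((1/2) * (v (i+1))^2 - (1/2) * (v i)^2 - (1/2) * (v (i+1) - v i)^2) := by
    unfold iph Dp
    rw [Finset.mul_sum]
    apply Finset.sum_congr rfl; intro i _; field_simp; ring
  have e2 : -(h/2) * nh2 N h (Dp h v)
      = ∑ i ∈ Finset.Icc (1:ℤ) (N:ℤ), (-(1/2) * (v (i+1) - v i)^2) := by
    unfold nh2 Dp
    rw [← mul_assoc, Finset.mul_sum]
    apply Finset.sum_congr rfl; intro i _; field_simp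
  have e3 : ∑ i ∈ Finset.Icc (1:ℤ) (N:ℤ), ((1/2) * (v (i+1))^2)
      = ∑ i ∈ Finset.Icc (1:ℤ) (N:ℤ), ((1/2) * (v i)^2) := by
    have hp : PeriodicGrid N (fun i => (1/2 : ℝ) * (v i)^2) := by
      intro i; simp only; rw [hv]
    exact sum_shift hN hp
  rw [e1, e2]
  rw [show (fun i => (1/2 : ℝ) * (v (i+1))^2 - (1/2) * (v i)^2 - (1/2) * (v (i+1) - v i)^2)
    = fun i => ((1/2 : ℝ) * (v (i+1))^2 - (1/2) * (v i)^2 - (1/2) * (v (i+1) - v i)^2) from rfl]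
  rw [Finset.sum_sub_distrib, Finset.sum_sub_distrib, e3, sub_self, zero_sub,
    ← Finset.sum_neg_distrib]
  exact Finset.sum_congr rfl (fun i _ => by ring)

/-- The Burgers-type term is skew: `(v, v·D₀v + D₀(v²)) = 0`. -/
lemma burgers (hN : 1 ≤ N) (hh : h ≠ 0) (hv : PeriodicGrid N v) :
    iph N h v (fun i => v i * D0 h v i + D0 h (fun j => (v j)^2) i) = 0 := by
  set A : ℤ → ℝ := fun i => (v i)^2 * v (i+1) + v i * (v (i+1))^2 with hA
  have hpA : PeriodicGrid N A := by
    intro i; simp only [hA]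
    rw [hv i, show i + (N:ℤ) + 1 = (i + 1) + (N:ℤ) by ring, hv]
  have e1 : iph N h v (fun i => v i * D0 h v i + D0 h (fun j => (v j)^2) i)
      = ∑ i ∈ Finset.Icc (1:ℤ) (N:ℤ), ((1/2) * A i - (1/2) * A (i-1)) := by
    unfold iph D0
    rw [Finset.mul_sum]
    apply Finset.sum_congr rfl; intro i _
    simp only [hA]
    field_simp; ring
  rw [e1, Finset.sum_sub_distrib]
  have h2 : ∑ i ∈ Finset.Icc (1:ℤ) (N:ℤ), ((1/2 : ℝ) * A (i-1))
      = ∑ i ∈ Finset.Icc (1:ℤ) (N:ℤ), ((1/2 : ℝ) * A i) := by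
    have hp : PeriodicGrid N (fun i => (1/2 : ℝ) * A i) := by
      intro i; simp only; rw [hpA]
    exact sum_shift_neg hN hp
  rw [h2, sub_self]

/-- `‖D₊D₊v‖² = ‖D₊D₋v‖²` (the two are shifts of each other). -/
lemma nh2_DpDp (hN : 1 ≤ N) (hv : PeriodicGrid N v) :
    nh2 N h (Dp h (Dp h v)) = nh2 N h (Dp h (Dm h v)) := by
  unfold nh2
  congr 1
  have hp : PeriodicGrid N (fun i => (Dp h (Dm h v) i)^2) := per_sq (per_Dp (per_Dm hv))
  rw [← sum_shift hN hp]
  apply Finset.sum_congr rfl; intro i _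
  simp only [Dp, Dm]
  rw [show i + 1 + 1 - 1 = i + 1 by ring, show i + 1 - 1 = i by ring]

/-- `‖D₋D₊D₊v‖² = ‖D₊D₋D₋v‖²` (the two are shifts of each other). -/
lemma nh2_DmDpDp (hN : 1 ≤ N) (hv : PeriodicGrid N v) :
    nh2 N h (Dm h (Dp h (Dp h v))) = nh2 N h (Dp h (Dm h (Dm h v))) := by
  unfold nh2
  congr 1
  have hp : PeriodicGrid N (fun i => (Dp h (Dm h (Dm h v)) i)^2) :=
    per_sq (per_Dp (per_Dm (per_Dm hv)))
  rw [← sum_shift hN hp]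
  apply Finset.sum_congr rfl; intro i _
  simp only [Dp, Dm]
  rw [show i + 1 + 1 - 1 = i + 1 by ring, show i + 1 - 1 = i by ring,
    show i - 1 + 1 + 1 = i + 1 by ring, show i - 1 + 1 = i by ring]

/-- Key energy identity for the semi-discrete RHS. -/
lemma key_identity (hN : 1 ≤ N) (hh : h ≠ 0) (hv : PeriodicGrid N v) :
    iph N h v (fun i =>
        -(1/3) * (v i * D0 h v i + D0 h (fun j => (v j) ^ 2) i)
          - Dm h (Dp h (Dp h v)) i
          + Dp h (Dp h (Dp h (Dm h (Dm h v)))) i)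
      = -(h/2) * (nh2 N h (Dp h (Dm h v)) + nh2 N h (Dm h (Dp h (Dp h v)))) := by
  set B : ℤ → ℝ := fun i => v i * D0 h v i + D0 h (fun j => (v j)^2) i with hB
  set C : ℤ → ℝ := fun i => Dm h (Dp h (Dp h v)) i with hC
  set D : ℤ → ℝ := fun i => Dp h (Dp h (Dp h (Dm h (Dm h v)))) i with hD
  have split : iph N h v (fun i => -(1/3) * B i - C i + D i)
      = -(1/3) * iph N h v B - iph N h v C + iph N h v D := by
    unfold iph
    rw [Finset.mul_sum, Finset.mul_sum, Finset.mul_sum, Finset.mul_sum, Finset.mul_sum,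
      ← Finset.sum_sub_distrib, ← Finset.sum_add_distrib]
    apply Finset.sum_congr rfl; intro i _; ring
  have hburg : iph N h v B = 0 := burgers hN hh hv
  have hterm2 : iph N h v C = (h/2) * nh2 N h (Dp h (Dp h v)) := by
    have h1 : iph N h v (Dm h (Dp h (Dp h v))) = - iph N h (Dp h v) (Dp h (Dp h v)) := by
      have h0 := sbp (f := v) (g := Dp h (Dp h v)) hN hh hv (per_Dp (per_Dp hv))
      linarith [h0]
    rw [hC, h1, iph_self_Dp hN hh (per_Dp hv)]
    ring
  have hterm3 : iph N h v D = -(h/2) * nh2 N h (Dp h (Dm h (Dm h v))) := by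
    have h1 : iph N h v (Dp h (Dp h (Dp h (Dm h (Dm h v)))))
        = - iph N h (Dm h v) (Dp h (Dp h (Dm h (Dm h v)))) :=
      sbp2 hN hh hv (per_Dp (per_Dp (per_Dm (per_Dm hv))))
    have h2 : iph N h (Dm h v) (Dp h (Dp h (Dm h (Dm h v))))
        = - iph N h (Dm h (Dm h v)) (Dp h (Dm h (Dm h v))) :=
      sbp2 hN hh (per_Dm hv) (per_Dp (per_Dm (per_Dm hv)))
    rw [hD, h1, h2, iph_self_Dp hN hh (per_Dm (per_Dm hv))]
    ring
  rw [split, hburg, hterm2, hterm3, nh2_DpDp hN hv, nh2_DmDpDp hN hv]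
  ring

end Aux

open intervalIntegral MeasureTheory

/-- Paper's estimate (2.8) in Theorem 2.4: if `t ↦ u(t)` is a time-differentiable family of
periodic grid functions solving the semi-discrete scheme
`(u_i)' = −(1/3)[u_i (D₀u)_i + (D₀u²)_i] − (D₋D₊²u)_i + (D₊³D₋²u)_i` on `[0,T]`, then for
every `t ∈ [0,T]`,
`‖u(t)‖_h² + (Δx/2) ∫₀ᵗ (‖D₊D₋u(τ)‖_h² + ‖D₋D₊²u(τ)‖_h²) dτ ≤ ‖u(0)‖_h²`;
in particular `‖u(t)‖_h ≤ ‖u(0)‖_h`. Here `Δx = 1/N`. -/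
theorem semidiscrete_L2_stability (N : ℕ) (hN : 1 ≤ N) (Δx : ℝ) (hΔx : Δx = 1 / N)
    (T : ℝ) (hT : 0 ≤ T) (u : ℝ → ℤ → ℝ)
    (hper : ∀ t : ℝ, PeriodicGrid N (u t))
    (heq : ∀ i : ℤ, ∀ t ∈ Set.Icc (0 : ℝ) T,
      HasDerivAt (fun s => u s i)
        (-(1/3) * (u t i * D0 Δx (u t) i + D0 Δx (fun j => (u t j) ^ 2) i)
          - Dm Δx (Dp Δx (Dp Δx (u t))) i
          + Dp Δx (Dp Δx (Dp Δx (Dm Δx (Dm Δx (u t))))) i) t) :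
    ∀ t ∈ Set.Icc (0 : ℝ) T,
      nh2 N Δx (u t)
        + (Δx / 2) * ∫ τ in (0:ℝ)..t,
            (nh2 N Δx (Dp Δx (Dm Δx (u τ))) + nh2 N Δx (Dm Δx (Dp Δx (Dp Δx (u τ)))))
        ≤ nh2 N Δx (u 0)
      ∧ normh N Δx (u t) ≤ normh N Δx (u 0) := by
  have hNpos : (0:ℝ) < N := by exact_mod_cast hN
  have hΔpos : 0 < Δx := by rw [hΔx]; positivity
  have hne : Δx ≠ 0 := ne_of_gt hΔpos
  intro t ht
  obtain ⟨ht0, htT⟩ := ht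
  set F : ℝ → ℝ := fun τ =>
    nh2 N Δx (Dp Δx (Dm Δx (u τ))) + nh2 N Δx (Dm Δx (Dp Δx (Dp Δx (u τ)))) with hF
  have hcont : ∀ i : ℤ, ContinuousOn (fun s => u s i) (Set.Icc 0 T) := fun i τ hτ =>
    ((heq i τ hτ).continuousAt).continuousWithinAt
  have hc1 : ∀ i : ℤ, ContinuousOn (fun τ => Dp Δx (Dm Δx (u τ)) i) (Set.Icc 0 T) := by
    intro i
    simp only [Dp, Dm]
    rw [show i + 1 - 1 = i from by ring]
    exact ((((hcont (i+1)).sub (hcont i)).div_const Δx).sub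
      (((hcont i).sub (hcont (i-1))).div_const Δx)).div_const Δx
  have hc2 : ∀ i : ℤ, ContinuousOn (fun τ => Dm Δx (Dp Δx (Dp Δx (u τ))) i) (Set.Icc 0 T) := by
    intro i
    simp only [Dp, Dm]
    exact (((((hcont (i+1+1)).sub (hcont (i+1))).div_const Δx).sub
      (((hcont (i+1)).sub (hcont i)).div_const Δx)).div_const Δx).sub
      (((((hcont (i-1+1+1)).sub (hcont (i-1+1))).div_const Δx).sub
      (((hcont (i-1+1)).sub (hcont (i-1))).div_const Δx)).div_const Δx) |>.div_const Δx
  have hFcont : ContinuousOn F (Set.Icc 0 T) := by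
    rw [hF]
    unfold nh2
    exact (continuousOn_const.mul (continuousOn_finset_sum _ fun i _ => (hc1 i).pow 2)).add
      (continuousOn_const.mul (continuousOn_finset_sum _ fun i _ => (hc2 i).pow 2))
  have hFnonneg : ∀ τ, 0 ≤ F τ := by
    intro τ
    apply add_nonneg <;>
    · unfold nh2
      exact mul_nonneg hΔpos.le (Finset.sum_nonneg fun i _ => sq_nonneg _)
  have hE : ∀ τ ∈ Set.Icc (0:ℝ) T,
      HasDerivAt (fun s => nh2 N Δx (u s)) (-Δx * F τ) τ := by
    intro τ hτ
    set d : ℤ → ℝ := fun i =>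
      -(1/3) * (u τ i * D0 Δx (u τ) i + D0 Δx (fun j => (u τ j) ^ 2) i)
        - Dm Δx (Dp Δx (Dp Δx (u τ))) i
        + Dp Δx (Dp Δx (Dp Δx (Dm Δx (Dm Δx (u τ))))) i with hd
    have hsum : HasDerivAt (fun s => ∑ i ∈ Finset.Icc (1:ℤ) (N:ℤ), (u s i)^2)
        (∑ i ∈ Finset.Icc (1:ℤ) (N:ℤ), 2 * u τ i * d i) τ := by
      apply HasDerivAt.fun_sum
      intro i _
      have hp := (heq i τ hτ).fun_pow 2
      refine hp.congr_deriv ?_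
      rw [hd]; push_cast; ring
    have h2 := hsum.const_mul Δx
    have hval : Δx * ∑ i ∈ Finset.Icc (1:ℤ) (N:ℤ), 2 * u τ i * d i = -Δx * F τ := by
      have hk : iph N Δx (u τ) d = -(Δx/2) * (nh2 N Δx (Dp Δx (Dm Δx (u τ)))
          + nh2 N Δx (Dm Δx (Dp Δx (Dp Δx (u τ))))) := by
        rw [hd]; exact key_identity hN hne (hper τ)
      have h3 : Δx * ∑ i ∈ Finset.Icc (1:ℤ) (N:ℤ), 2 * u τ i * d i
          = 2 * iph N Δx (u τ) d := by
        unfold iph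
        rw [Finset.mul_sum, Finset.mul_sum, Finset.mul_sum]
        apply Finset.sum_congr rfl; intro i _; ring
      rw [h3, hk, hF]; ring
    rw [← hval]
    unfold nh2
    exact h2
  have hsub : Set.uIcc (0:ℝ) t ⊆ Set.Icc 0 T := by
    rw [Set.uIcc_of_le ht0]; exact Set.Icc_subset_Icc le_rfl htT
  have hint : IntervalIntegrable (fun τ => -Δx * F τ) volume 0 t :=
    (continuousOn_const.mul (hFcont.mono hsub)).intervalIntegrable
  have hftc := intervalIntegral.integral_eq_sub_of_hasDerivAt
    (fun τ hτ => hE τ (hsub hτ)) hint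
  have hi : ∫ τ in (0:ℝ)..t, (-Δx * F τ) = -Δx * ∫ τ in (0:ℝ)..t, F τ :=
    intervalIntegral.integral_const_mul _ _
  have hFint : IntervalIntegrable F volume 0 t :=
    (hFcont.mono hsub).intervalIntegrable
  have hnonneg : 0 ≤ ∫ τ in (0:ℝ)..t, F τ :=
    intervalIntegral.integral_nonneg ht0 (fun τ _ => hFnonneg τ)
  have heqn : nh2 N Δx (u t) = nh2 N Δx (u 0) - Δx * ∫ τ in (0:ℝ)..t, F τ := by
    rw [hi] at hftc; linarith [hftc]
  have hhalf : 0 ≤ (Δx/2) * ∫ τ in (0:ℝ)..t, F τ :=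
    mul_nonneg (by linarith) hnonneg
  constructor
  · calc nh2 N Δx (u t) + (Δx / 2) * ∫ τ in (0:ℝ)..t, F τ
        = nh2 N Δx (u 0) - (Δx/2) * ∫ τ in (0:ℝ)..t, F τ := by rw [heqn]; ring
      _ ≤ nh2 N Δx (u 0) := by linarith
  · unfold normh
    apply Real.sqrt_le_sqrt
    nlinarith [hhalf]
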